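/- Let G be a loopless multigraph with maximum degree Δ, let M be a maximal matching of G, and let G′ = G − M be the multigraph obtained by removing M from G. Then no two vertices that both have degree Δ in G′ are adjacent in the support of G′; that is, the set of vertices of degree Δ in G′ is an independent set of the support of G′. -/

import Mathlib

open scoped Classical

namespace NSBPaper

variable {V : Type} [Fintype V] [DecidableEq V]

/-- Degree of a vertex in a loopless multigraph given by multiplicity function `w`. -/
def deg (w : V → V → ℕ) (v : V) : ℕ := ∑ u, w v u

/-- Maximum degree of the multigraph. -/
def maxDeg (w : V → V → ℕ) : ℕ := Finset.univ.sup fun v => deg w v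

/-- The support simple graph of a multigraph: `u` and `v` are adjacent iff `u ≠ v`
and there is at least one multi-edge between them. -/
def support (w : V → V → ℕ) : SimpleGraph V where
  Adj u v := u ≠ v ∧ 1 ≤ w u v ∧ 1 ≤ w v u
  symm := ⟨fun u v h => ⟨h.1.symm, h.2.2, h.2.1⟩⟩
  loopless := ⟨fun v h => h.1 rfl⟩

/-- A set of unordered pairs `M` saturates a vertex `v` if some pair of `M` contains `v`. -/
def Saturates (M : Finset (Sym2 V)) (v : V) : Prop := ∃ e ∈ M, v ∈ e

/-- `M` is a matching of the multigraph `w`: its elements are non-loop edges of the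
support, and no two distinct elements share a vertex. -/
def IsMatching (w : V → V → ℕ) (M : Finset (Sym2 V)) : Prop :=
  (∀ e ∈ M, ¬ e.IsDiag) ∧
  (∀ u v : V, s(u, v) ∈ M → 1 ≤ w u v) ∧
  (∀ e ∈ M, ∀ f ∈ M, e ≠ f → ∀ x : V, x ∈ e → x ∉ f)

/-- `M` is a maximal matching of `w`: no pair can be added keeping it a matching. -/
def IsMaximalMatching (w : V → V → ℕ) (M : Finset (Sym2 V)) : Prop :=
  IsMatching w M ∧ ∀ e : Sym2 V, e ∉ M → ¬ IsMatching w (insert e M)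

/-- Removing a matching `M` from the multigraph `w`: the multiplicity of each pair in `M`
decreases by one. -/
def removeMatching (w : V → V → ℕ) (M : Finset (Sym2 V)) : V → V → ℕ :=
  fun u v => if s(u, v) ∈ M then w u v - 1 else w u v

/-- The subgraph of `G` induced by `Z` is bipartite: there is a set `A` such that every
edge of `G` inside `Z` joins `A` to its complement. -/
def BipartiteOn (G : SimpleGraph V) (Z : Set V) : Prop :=
  ∃ A : Set V, ∀ ⦃u v : V⦄, u ∈ Z → v ∈ Z → G.Adj u v → (u ∈ A ↔ v ∉ A)

/-- The edge multiset of `w` can be partitioned into `T` matchings. -/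
def CanEvacuate (w : V → V → ℕ) (T : ℕ) : Prop :=
  ∃ M : Fin T → Finset (Sym2 V),
    (∀ j, IsMatching w (M j)) ∧
    ∀ u v : V, (Finset.univ.filter fun j => s(u, v) ∈ M j).card = w u v

/-- The vertex-weight of a matching: the sum of the weights of its saturated vertices. -/
noncomputable def matchWeight (φ : V → ℕ) (M : Finset (Sym2 V)) : ℕ :=
  ∑ v : V, if Saturates M v then φ v else 0

/-- `Rfun M k i = 1` iff vertex `i` is saturated by the matching chosen in slot `k`. -/
noncomputable def Rfun (M : ℕ → Finset (Sym2 V)) (k : ℕ) (i : V) : ℕ :=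
  if Saturates (M k) i then 1 else 0

/-- `Ufun M k i` is `R i (k-1) * R i (k-2)` if `k ≡ 2 [MOD 3]` and `R i (k-1)` otherwise,
with `R i k = 0` for `k < 0`. -/
noncomputable def Ufun (M : ℕ → Finset (Sym2 V)) (k : ℕ) (i : V) : ℕ :=
  if k = 0 then 0
  else if k % 3 = 2 then Rfun M (k - 1) i * Rfun M (k - 2) i
  else Rfun M (k - 1) i

/-- Vertex `i` is heavy in `w`: `n * d(i) ≥ (n - 1) * Δ`. -/
def Heavy (w : V → V → ℕ) (i : V) : Prop :=
  (Fintype.card V - 1) * maxDeg w ≤ Fintype.card V * deg w i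

/-- Vertex `i` is critical in `w`: its degree is the maximum degree. -/
def Critical (w : V → V → ℕ) (i : V) : Prop := deg w i = maxDeg w

/-- The NSB weight of vertex `i`, where `u i` records whether `i` received enough
service previously. -/
noncomputable def nsbWeight (w : V → V → ℕ) (u : V → ℕ) (i : V) : ℕ :=
  if Heavy w i then deg w i * (2 - u i) else deg w i

/-- The LC-NSB weight of vertex `i`. -/
noncomputable def lcnsbWeight (w : V → V → ℕ) (u : V → ℕ) (i : V) : ℕ :=
  if Critical w i then 5 - 2 * u i
  else if Heavy w i then 4 - 2 * u i
  else 1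

/-- An NSB evacuation run on the initial multigraph `w0`: in each slot `k`, a matching
`M k` of `G k` maximizing the total NSB weight of saturated vertices is removed. -/
structure NSBRun (w0 : V → V → ℕ) where
  G : ℕ → V → V → ℕ
  M : ℕ → Finset (Sym2 V)
  init : G 0 = w0
  step : ∀ k, G (k + 1) = removeMatching (G k) (M k)
  matching : ∀ k, IsMatching (G k) (M k)
  opt : ∀ k, ∀ M' : Finset (Sym2 V), IsMatching (G k) M' →
    matchWeight (nsbWeight (G k) (Ufun M k)) M' ≤ matchWeight (nsbWeight (G k) (Ufun M k)) (M k)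

/-- An LC-NSB evacuation run on the initial multigraph `w0`. -/
structure LCNSBRun (w0 : V → V → ℕ) where
  G : ℕ → V → V → ℕ
  M : ℕ → Finset (Sym2 V)
  init : G 0 = w0
  step : ∀ k, G (k + 1) = removeMatching (G k) (M k)
  matching : ∀ k, IsMatching (G k) (M k)
  opt : ∀ k, ∀ M' : Finset (Sym2 V), IsMatching (G k) M' →
    matchWeight (lcnsbWeight (G k) (Ufun M k)) M' ≤
      matchWeight (lcnsbWeight (G k) (Ufun M k)) (M k)


lemma removeMatching_le (w : V → V → ℕ) (M : Finset (Sym2 V)) (u v : V) :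
    removeMatching w M u v ≤ w u v := by
  unfold removeMatching; split <;> omega

lemma deg_removeMatching_le (w : V → V → ℕ) (M : Finset (Sym2 V)) (u : V) :
    deg (removeMatching w M) u ≤ deg w u :=
  Finset.sum_le_sum fun x _ => removeMatching_le w M u x

lemma deg_le_maxDeg (w : V → V → ℕ) (u : V) : deg w u ≤ maxDeg w :=
  Finset.le_sup (Finset.mem_univ u)

lemma deg_removeMatching_lt_of_saturates (w : V → V → ℕ) (M : Finset (Sym2 V))
    (hMm : IsMatching w M) (u : V) (hs : Saturates M u) :
    deg (removeMatching w M) u < deg w u := by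
  obtain ⟨e, heM, hue⟩ := hs
  induction e with
  | h a b =>
    have hx : ∃ x, s(u, x) ∈ M := by
      rcases Sym2.mem_iff.mp hue with rfl | rfl
      · exact ⟨b, heM⟩
      · exact ⟨a, by rwa [Sym2.eq_swap]⟩
    obtain ⟨x, hxM⟩ := hx
    have hw : 1 ≤ w u x := hMm.2.1 u x hxM
    refine Finset.sum_lt_sum (fun y _ => removeMatching_le w M u y)
      ⟨x, Finset.mem_univ x, ?_⟩
    unfold removeMatching
    rw [if_pos hxM]
    omega

lemma unsaturated_of_deg_eq (w : V → V → ℕ) (M : Finset (Sym2 V))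
    (hMm : IsMatching w M) (u : V)
    (hu : deg (removeMatching w M) u = maxDeg w) : ¬ Saturates M u := by
  intro hs
  have h1 := deg_removeMatching_lt_of_saturates w M hMm u hs
  have h2 := deg_le_maxDeg w u
  omega

/-- After removing a maximal matching `M` from `G`, the vertices that still
have degree `Δ` (the maximum degree of `G`) form an independent set of the support of
`G − M`. -/
theorem maximal_matching_maxdeg_indep {V : Type} [Fintype V] [DecidableEq V]
    (w : V → V → ℕ) (hsymm : ∀ u v, w u v = w v u) (hloop : ∀ v, w v v = 0)
    (M : Finset (Sym2 V)) (hM : IsMaximalMatching w M) :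
    ∀ u v : V, deg (removeMatching w M) u = maxDeg w →
      deg (removeMatching w M) v = maxDeg w →
      ¬ (support (removeMatching w M)).Adj u v := by
  intro u v hu hv hadj
  obtain ⟨hMm, hmax⟩ := hM
  have hsu : ¬ Saturates M u := unsaturated_of_deg_eq w M hMm u hu
  have hsv : ¬ Saturates M v := unsaturated_of_deg_eq w M hMm v hv
  obtain ⟨hne, h1, h2⟩ := hadj
  have hnotM : s(u, v) ∉ M := fun h => hsu ⟨s(u, v), h, Sym2.mem_mk_left u v⟩
  apply hmax s(u, v) hnotM
  refine ⟨?_, ?_, ?_⟩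
  · intro e he
    rcases Finset.mem_insert.mp he with rfl | he
    · simpa [Sym2.isDiag_iff_proj_eq] using hne
    · exact hMm.1 e he
  · intro a b hab
    rcases Finset.mem_insert.mp hab with h | h
    · have : removeMatching w M a b ≥ 1 := by
        rcases Sym2.eq_iff.mp h with ⟨rfl, rfl⟩ | ⟨rfl, rfl⟩
        · exact h1
        · exact h2
      exact le_trans this (removeMatching_le w M a b)
    · exact hMm.2.1 a b h
  · intro e he f hf hef x hxe hxf
    rcases Finset.mem_insert.mp he with rfl | heM <;>
      rcases Finset.mem_insert.mp hf with rfl | hfM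
    · exact hef rfl
    · rcases Sym2.mem_iff.mp hxe with rfl | rfl
      · exact hsu ⟨f, hfM, hxf⟩
      · exact hsv ⟨f, hfM, hxf⟩
    · rcases Sym2.mem_iff.mp hxf with rfl | rfl
      · exact hsu ⟨e, heM, hxe⟩
      · exact hsv ⟨e, heM, hxe⟩
    · exact hMm.2.2 e heM f hfM hef x hxe hxf

end NSBPaper
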